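/- Let (R, ⊕, ≤) be a lattice ordered monoid with ⊕ commutative, satisfying the weak Archimedean property: for all a, b ∈ R and all x ∈ R with x > 0, there exists n ∈ ℕ such that n·x ⊕ a ≰ b, where n·x denotes x ⊕ ⋯ ⊕ x (n times). Let D = (V, A) be a finite digraph with arc resources (x_a)_{a∈A} in R such that x_C > 0 for every cycle C of D, fix an origin o ∈ V, and let (b_v)_{v∈V} be any family of elements of R. Then for every x_M ∈ R, the set of paths P in D with origin o satisfying x_P ⊕ b_v ≤ x_M, where v is the destination of P, is finite. -/

import Mathlib

/-- A digraph with vertex set `V` and arc set `A`: each arc has a tail and a head. -/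
structure Digraph' (V A : Type*) where
  tail : A → V
  head : A → V

/-- `D.IsPathFrom v w l` : the list of arcs `l` is a path from `v` to `w` in `D`:
the tail of each arc is the head of the previous one (or `v` for the first arc),
and the head of the last arc is `w`; the empty list is the unique path from `v` to `v`. -/
def Digraph'.IsPathFrom {V A : Type*} (D : Digraph' V A) : V → V → List A → Prop
  | v, w, [] => v = w
  | v, w, a :: l => D.tail a = v ∧ D.IsPathFrom (D.head a) w l

/-- The resource of a path `P = (a₁, …, a_k)` is `x_{a₁} + ⋯ + x_{a_k}` (and `0` for
the empty path). -/
def pathRes {A R : Type*} [AddMonoid R] (x : A → R) (l : List A) : R := (l.map x).sum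

namespace Stmt9Aux

variable {V A R : Type*}

/-- destination of a path with arc list `l` starting at `u` -/
def dst (D : Digraph' V A) (u : V) (l : List A) : V := l.foldl (fun _ a => D.head a) u

lemma dst_append (D : Digraph' V A) (u : V) (l1 l2 : List A) :
    dst D u (l1 ++ l2) = dst D (dst D u l1) l2 := List.foldl_append ..

lemma isPathFrom_append (D : Digraph' V A) (u w : V) (l1 l2 : List A) :
    D.IsPathFrom u w (l1 ++ l2) ↔
      D.IsPathFrom u (dst D u l1) l1 ∧ D.IsPathFrom (dst D u l1) w l2 := by
  induction l1 generalizing u with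
  | nil => simp [Digraph'.IsPathFrom, dst]
  | cons a l ih =>
      simp only [List.cons_append, List.append_eq, Digraph'.IsPathFrom, dst, List.foldl_cons,
        ih, and_assoc]

lemma pathRes_append [AddMonoid R] (x : A → R) (l1 l2 : List A) :
    pathRes x (l1 ++ l2) = pathRes x l1 + pathRes x l2 := by
  simp [pathRes]

section Order
variable [AddCommMonoid R] [PartialOrder R]
  [CovariantClass R R (· + ·) (· ≤ ·)]
  [CovariantClass R R (Function.swap (· + ·)) (· ≤ ·)]

lemma sum_nonneg' : ∀ (l : List R), (∀ r ∈ l, (0:R) ≤ r) → 0 ≤ l.sum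
  | [], _ => le_refl 0
  | r :: l, h => by
      have h1 : (0:R) ≤ r := h r (by simp)
      have h2 : (0:R) ≤ l.sum := sum_nonneg' l fun s hs => h s (by simp [hs])
      calc (0:R) = 0 + 0 := (add_zero 0).symm
        _ ≤ r + l.sum := add_le_add h1 h2
        _ = (r :: l).sum := (List.sum_cons ..).symm

lemma sublist_sum_le {l1 l2 : List R} (h : l1.Sublist l2) (h2 : ∀ r ∈ l2, (0:R) ≤ r) :
    l1.sum ≤ l2.sum := by
  induction h with
  | slnil => exact le_refl _
  | cons a h ih =>
      have := ih (fun r hr => h2 r (by simp [hr]))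
      calc _ ≤ _ := this
        _ = 0 + _ := (zero_add _).symm
        _ ≤ _ := add_le_add (h2 a (by simp)) (le_refl _)
  | cons_cons a h ih =>
      simp only [List.sum_cons]
      exact add_le_add (le_refl _) (ih fun r hr => h2 r (by simp [hr]))

lemma nsmul_nonneg' {r : R} (h : 0 ≤ r) : ∀ n : ℕ, 0 ≤ n • r
  | 0 => by simp
  | n + 1 => by
      rw [succ_nsmul]
      calc (0:R) = 0 + 0 := (add_zero 0).symm
        _ ≤ n • r + r := add_le_add (nsmul_nonneg' h n) h

lemma nsmul_le_nsmul' {r : R} (h : 0 ≤ r) {m n : ℕ} (hmn : m ≤ n) : m • r ≤ n • r := by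
  obtain ⟨k, rfl⟩ := Nat.exists_eq_add_of_le hmn
  rw [add_nsmul]
  calc m • r = m • r + 0 := (add_zero _).symm
    _ ≤ m • r + k • r := add_le_add (le_refl _) (nsmul_nonneg' h k)

end Order

/-- Extract a cycle from a path whose vertex sequence repeats. -/
lemma extract (D : Digraph' V A) {u w : V} {l : List A} (hl : D.IsPathFrom u w l)
    {i j : ℕ} (hij : i < j) (hjl : j ≤ l.length)
    (heq : dst D u (l.take i) = dst D u (l.take j)) :
    ∃ (p : V) (c l' : List A), c ≠ [] ∧ c.length = j - i ∧ D.IsPathFrom p p c ∧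
      D.IsPathFrom u w l' ∧ l'.length + c.length = l.length ∧
      ∀ (S : Type*) (_ : AddCommMonoid S) (x : A → S),
        pathRes x l = pathRes x l' + pathRes x c := by
  set p := dst D u (l.take i) with hp
  have hclen : ((l.drop i).take (j - i)).length = j - i := by
    rw [List.length_take, List.length_drop]; omega
  have hdj : (l.drop i).take (j - i) ++ l.drop j = l.drop i := by
    have h1 : (l.drop i).drop (j - i) = l.drop j := by
      rw [List.drop_drop]; congr 1; omega
    rw [← h1, List.take_append_drop]
  have hlsplit : l = l.take i ++ ((l.drop i).take (j - i) ++ l.drop j) := by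
    rw [hdj, List.take_append_drop]
  have htj : l.take j = l.take i ++ (l.drop i).take (j - i) := by
    have hji : j = i + (j - i) := by omega
    conv_lhs => rw [hji, List.take_add]
  have h3 := (isPathFrom_append D u w (l.take i) ((l.drop i).take (j - i) ++ l.drop j)).mp
    (by rw [← hlsplit]; exact hl)
  have h4 := (isPathFrom_append D p w ((l.drop i).take (j - i)) (l.drop j)).mp h3.2
  have hdstc : dst D p ((l.drop i).take (j - i)) = p := by
    rw [hp, ← dst_append, ← htj, ← heq]
  refine ⟨p, (l.drop i).take (j - i), l.take i ++ l.drop j, ?_, hclen, ?_, ?_, ?_, ?_⟩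
  · intro h
    rw [h] at hclen
    simp at hclen
    omega
  · have := h4.1
    rwa [hdstc] at this
  · refine (isPathFrom_append D u w (l.take i) (l.drop j)).mpr ⟨h3.1, ?_⟩
    have := h4.2
    rwa [hdstc] at this
  · rw [List.length_append, List.length_take, List.length_take, List.length_drop,
      List.length_drop]
    omega
  · intro S _ x
    rw [pathRes_append]
    conv_lhs => rw [hlsplit]
    rw [pathRes_append, pathRes_append]
    rw [add_assoc, add_comm (pathRes x ((l.drop i).take (j - i)))]

end Stmt9Aux

open Stmt9Aux in
/-- in a commutative lattice ordered monoid satisfying the weak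
Archimedean property, if `x_C > 0` for every cycle `C` of a finite digraph `D`, then
for every family `(b_v)` of resources and every `x_M`, the set of paths `P` with
origin `o` satisfying `x_P + b v ≤ x_M` (where `v` is the destination of `P`) is
finite. -/
theorem stmt9 {V A R : Type*} [Fintype V] [Fintype A]
    [Lattice R] [AddCommMonoid R]
    [CovariantClass R R (· + ·) (· ≤ ·)]
    [CovariantClass R R (Function.swap (· + ·)) (· ≤ ·)]
    (harch : ∀ a b xx : R, (0 ≤ xx ∧ xx ≠ 0) → ∃ n : ℕ, ¬ (n • xx + a ≤ b))
    (D : Digraph' V A) (x : A → R)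
    (hcyc : ∀ (u : V) (C : List A), C ≠ [] → D.IsPathFrom u u C →
      0 ≤ pathRes x C ∧ pathRes x C ≠ 0)
    (o : V) (b : V → R) (xM : R) :
    {l : List A | ∃ v : V, D.IsPathFrom o v l ∧ pathRes x l + b v ≤ xM}.Finite := by
  classical
  letI : BEq (List A) := instBEqOfDecidableEq
  set K := Fintype.card V with hKdef
  have hK : 0 < K := Fintype.card_pos_iff.mpr ⟨o⟩
  -- Decomposition of every path into a short path and a list of short cycles.
  have decomp : ∀ (n : ℕ) (l : List A), l.length ≤ n → ∀ u w : V, D.IsPathFrom u w l →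
      ∃ (l0 : List A) (cs : List (List A)),
        l0.length < K ∧ D.IsPathFrom u w l0 ∧
        (∀ c ∈ cs, c.length ≤ K ∧ 0 ≤ pathRes x c ∧ pathRes x c ≠ 0) ∧
        pathRes x l = pathRes x l0 + (cs.map (pathRes x)).sum ∧
        l.length ≤ l0.length + K * cs.length := by
    intro n
    induction n with
    | zero =>
        intro l hl u w hpath
        have : l = [] := List.length_eq_zero_iff.mp (Nat.le_zero.mp hl)
        subst this
        exact ⟨[], [], hK, hpath, by simp, by simp, by simp⟩
    | succ n ih =>
        intro l hl u w hpath
        by_cases hlen : l.length < K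
        · exact ⟨l, [], hlen, hpath, by simp, by simp, by simp⟩
        · push_neg at hlen
          -- find a repeated vertex among the first K+1 prefixes
          obtain ⟨i, j, hij, hfij⟩ :=
            Fintype.exists_ne_map_eq_of_card_lt
              (fun k : Fin (K + 1) => dst D u (l.take k)) (by simp [hKdef])
          wlog hlt : (i : ℕ) < (j : ℕ) generalizing i j
          · refine this j i hij.symm hfij.symm ?_
            have hne : (i:ℕ) ≠ (j:ℕ) := Fin.val_ne_of_ne hij
            omega
          · obtain ⟨p, c, l', hcne, hclen, hcpath, hl'path, hlensum, hres⟩ :=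
              extract D hpath hlt (le_trans (Nat.le_of_lt_succ j.isLt) hlen) hfij
            have hl'len : l'.length ≤ n := by
              have : 1 ≤ c.length := List.length_pos_iff.mpr hcne
              omega
            obtain ⟨l0, cs, h0len, h0path, hcs, hsum, hlen2⟩ := ih l' hl'len u w hl'path
            refine ⟨l0, c :: cs, h0len, h0path, ?_, ?_, ?_⟩
            · intro c' hc'
              rcases List.mem_cons.mp hc' with h | h
              · subst h
                refine ⟨?_, hcyc p c' hcne hcpath⟩
                have := j.isLt
                omega
              · exact hcs c' h
            · rw [hres R inferInstance x, hsum, List.map_cons, List.sum_cons]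
              abel
            · have hcK : c.length ≤ K := by have := j.isLt; omega
              simp only [List.length_cons]
              have : l.length = l'.length + c.length := hlensum.symm
              calc l.length = l'.length + c.length := this
                _ ≤ (l0.length + K * cs.length) + K := Nat.add_le_add hlen2 hcK
                _ = l0.length + K * (cs.length + 1) := by ring
  -- the finite set of candidate cycles and short starting paths
  have hfinS : {c : List A | c.length ≤ K}.Finite := List.finite_length_le A K
  set S : Finset (List A) := hfinS.toFinset with hSdef
  have hfinP : {l0 : List A | l0.length < K}.Finite := List.finite_length_lt A K
  set F : Finset (List A × V) := hfinP.toFinset ×ˢ Finset.univ with hFdef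
  have hFne : F.Nonempty := ⟨([], o), by simp [hFdef, hK]⟩
  set a : R := F.inf' hFne (fun p => pathRes x p.1 + b p.2) with hadef
  set nc : List A → ℕ := fun c =>
    if h : ∃ n : ℕ, ¬ (n • pathRes x c + a ≤ xM) then h.choose else 0 with hncdef
  set N : ℕ := S.sup nc with hNdef
  -- main length bound
  apply Set.Finite.subset (List.finite_length_le A (K + K * (S.card * N)))
  rintro l ⟨v, hpath, hle⟩
  obtain ⟨l0, cs, h0len, h0path, hcs, hsum, hlen2⟩ := decomp l.length l le_rfl o v hpath
  -- each cycle appears at most nc times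
  have hcount : ∀ c ∈ cs, cs.count c ≤ nc c := by
    intro c hc
    by_contra hgt
    push_neg at hgt
    obtain ⟨hcK, hc0, hcne⟩ := hcs c hc
    have hex : ∃ n : ℕ, ¬ (n • pathRes x c + a ≤ xM) := harch a xM _ ⟨hc0, hcne⟩
    have hspec : ¬ (nc c • pathRes x c + a ≤ xM) := by
      rw [hncdef]; simp only [dif_pos hex]; exact hex.choose_spec
    apply hspec
    -- replicate (nc c) c is a sublist of cs
    have hsub : (List.replicate (nc c) c).Sublist cs :=
      List.replicate_sublist_iff.mpr (le_of_lt hgt)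
    have hsub2 : ((List.replicate (nc c) c).map (pathRes x)).Sublist (cs.map (pathRes x)) :=
      hsub.map _
    have hnonneg : ∀ r ∈ cs.map (pathRes x), (0:R) ≤ r := by
      intro r hr
      obtain ⟨c', hc', rfl⟩ := List.mem_map.mp hr
      exact (hcs c' hc').2.1
    have hsumge : (nc c) • pathRes x c ≤ (cs.map (pathRes x)).sum := by
      have := sublist_sum_le hsub2 hnonneg
      rwa [List.map_replicate, List.sum_replicate] at this
    have hmem : (l0, v) ∈ F := by
      rw [hFdef, Finset.mem_product]
      exact ⟨hfinP.mem_toFinset.mpr h0len, Finset.mem_univ v⟩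
    have hage : a ≤ pathRes x l0 + b v := by
      rw [hadef]
      exact Finset.inf'_le (fun p => pathRes x p.1 + b p.2) hmem
    calc nc c • pathRes x c + a ≤ (cs.map (pathRes x)).sum + (pathRes x l0 + b v) :=
          add_le_add hsumge hage
      _ = (pathRes x l0 + (cs.map (pathRes x)).sum) + b v := by
          rw [← add_assoc, add_comm ((cs.map (pathRes x)).sum)]
      _ = pathRes x l + b v := by rw [← hsum]
      _ ≤ xM := hle
  -- cs.length ≤ S.card * N
  have hcsS : cs.toFinset ⊆ S := by
    intro c hc
    rw [List.mem_toFinset] at hc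
    exact hfinS.mem_toFinset.mpr (hcs c hc).1
  have hcslen : cs.length ≤ S.card * N := by
    calc cs.length = ∑ c ∈ cs.toFinset, cs.count c :=
          (List.sum_toFinset_count_eq_length cs).symm
      _ ≤ ∑ c ∈ cs.toFinset, N := by
          refine Finset.sum_le_sum ?_
          intro c hc
          rw [List.mem_toFinset] at hc
          exact le_trans (hcount c hc) (Finset.le_sup (hcsS (List.mem_toFinset.mpr hc)))
      _ = cs.toFinset.card * N := by rw [Finset.sum_const, smul_eq_mul]
      _ ≤ S.card * N := Nat.mul_le_mul_right N (Finset.card_le_card hcsS)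
  show l.length ≤ K + K * (S.card * N)
  calc l.length ≤ l0.length + K * cs.length := hlen2
    _ ≤ K + K * (S.card * N) := by
        have := Nat.mul_le_mul_left K hcslen
        omega
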